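/- arXiv:2501.12359 — 3 statements merged into one kernel-verified Lean document; each statement's English description precedes it below -/
import Mathlib

section
/- Let γ ≥ 1, let ρ and σ be states on ℂ^n, and let 𝓜 be a set of measurement operators (each M ∈ 𝓜 satisfies 0 ≤ M ≤ I) whose symmetrized set 𝓜₂ is nonempty. Then (γ + 1) · E_1^𝓜(ρ‖σ) ≤ E_γ^𝓜(ρ‖σ) + E_γ^𝓜(σ‖ρ) + γ − 1. -/
noncomputable section
open Matrix ComplexOrder

/-- Square complex matrices of size `n`. -/
abbrev Mat (n : ℕ) := Matrix (Fin n) (Fin n) ℂ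

/-- A quantum state: positive semidefinite with unit trace. -/
def IsState {n : ℕ} (ρ : Mat n) : Prop := ρ.PosSemidef ∧ ρ.trace = 1

/-- The symmetrized measurement set 𝓜₂ := {M ∈ 𝓜 : I − M ∈ 𝓜}. -/
def M2 {n : ℕ} (𝓜 : Set (Mat n)) : Set (Mat n) := {M | M ∈ 𝓜 ∧ (1 - M) ∈ 𝓜}

/-- Measured hockey-stick divergence for γ ≥ 1:
`E_γ^𝓜(ρ‖σ) = sup_{M ∈ 𝓜₂} Tr[M(ρ − γσ)]`. -/
def Emeas {n : ℕ} (γ : ℝ) (𝓜 : Set (Mat n)) (ρ σ : Mat n) : ℝ :=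
  sSup ((fun M => ((M * (ρ - (γ : ℂ) • σ)).trace).re) '' M2 𝓜)

lemma trace_re_nonneg {n : ℕ} {A : Mat n} (hA : A.PosSemidef) : 0 ≤ (A.trace).re := by
  have h : ∀ i, 0 ≤ (A i i).re := by
    intro i
    exact (Complex.nonneg_iff.mp hA.diag_nonneg).1
  simp only [Matrix.trace, Matrix.diag, Complex.re_sum]
  exact Finset.sum_nonneg fun i _ => h i

lemma trace_mul_re_nonneg {n : ℕ} {A B : Mat n} (hA : A.PosSemidef) (hB : B.PosSemidef) :
    0 ≤ ((A * B).trace).re := by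
  open scoped MatrixOrder in
  have hS : (CFC.sqrt B).PosSemidef := (CFC.sqrt_nonneg B).posSemidef
  open scoped MatrixOrder in
  have h1 : A * B = A * (CFC.sqrt B * CFC.sqrt B) := by rw [CFC.sqrt_mul_sqrt_self B hB.nonneg]
  have h2 : (A * (CFC.sqrt B * CFC.sqrt B)).trace = (CFC.sqrt B * A * CFC.sqrt B).trace := by
    rw [← Matrix.mul_assoc, Matrix.trace_mul_cycle]
  have hpsd : (CFC.sqrt B * A * CFC.sqrt B).PosSemidef := by
    have := hA.conjTranspose_mul_mul_same (CFC.sqrt B)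
    rwa [hS.isHermitian.eq] at this
  rw [h1, h2]
  exact trace_re_nonneg hpsd

lemma f_split {n : ℕ} (γ : ℝ) (M ρ σ : Mat n) :
    ((M * (ρ - (γ : ℂ) • σ)).trace).re
      = ((M * ρ).trace).re - γ * ((M * σ).trace).re := by
  rw [mul_sub, Matrix.trace_sub, Matrix.mul_smul, Matrix.trace_smul]
  simp [Complex.sub_re]

lemma one_sub_trace {n : ℕ} (M σ : Mat n) (hσt : σ.trace = 1) :
    (((1 - M) * σ).trace).re = 1 - ((M * σ).trace).re := by
  rw [sub_mul, one_mul, Matrix.trace_sub]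
  simp [hσt, Complex.sub_re]

lemma mem_bound {n : ℕ} {γ : ℝ} (hγ0 : 0 ≤ γ) {ρ σ M : Mat n}
    (hρp : ρ.PosSemidef) (hρt : ρ.trace = 1) (hσp : σ.PosSemidef)
    (hMp : M.PosSemidef) (hM1 : ((1 : Mat n) - M).PosSemidef) :
    ((M * (ρ - (γ : ℂ) • σ)).trace).re ≤ 1 := by
  rw [f_split]
  have h0 := trace_mul_re_nonneg hM1 hρp
  rw [one_sub_trace M ρ hρt] at h0
  have h2 := trace_mul_re_nonneg hMp hσp
  nlinarith

theorem stmt_1 {n : ℕ} (γ : ℝ) (hγ : 1 ≤ γ) (ρ σ : Mat n)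
    (hρ : IsState ρ) (hσ : IsState σ) (𝓜 : Set (Mat n))
    (h𝓜 : ∀ M ∈ 𝓜, M.PosSemidef ∧ ((1 : Mat n) - M).PosSemidef)
    (hne : (M2 𝓜).Nonempty) :
    (γ + 1) * Emeas 1 𝓜 ρ σ ≤ Emeas γ 𝓜 ρ σ + Emeas γ 𝓜 σ ρ + γ - 1 := by
  obtain ⟨hρp, hρt⟩ := hρ
  obtain ⟨hσp, hσt⟩ := hσ
  have hγ0 : (0:ℝ) ≤ γ := le_trans zero_le_one hγ
  have bdd : ∀ (ρ' σ' : Mat n), ρ'.PosSemidef → ρ'.trace = 1 → σ'.PosSemidef →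
      BddAbove ((fun M => ((M * (ρ' - (γ : ℂ) • σ')).trace).re) '' M2 𝓜) := by
    intro ρ' σ' h1 h2 h3
    refine ⟨1, fun x hx => ?_⟩
    obtain ⟨M, hM, rfl⟩ := hx
    exact mem_bound hγ0 h1 h2 h3 (h𝓜 M hM.1).1 (h𝓜 M hM.1).2
  have bdd1 := bdd ρ σ hρp hρt hσp
  have bdd2 := bdd σ ρ hσp hσt hρp
  have step : ∀ M ∈ M2 𝓜,
      (γ + 1) * ((M * (ρ - ((1:ℝ) : ℂ) • σ)).trace).re
        ≤ Emeas γ 𝓜 ρ σ + Emeas γ 𝓜 σ ρ + γ - 1 := by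
    intro M hM
    have hM' : (1 - M) ∈ M2 𝓜 := ⟨hM.2, by rw [sub_sub_cancel]; exact hM.1⟩
    have le1 : ((M * (ρ - (γ : ℂ) • σ)).trace).re ≤ Emeas γ 𝓜 ρ σ :=
      le_csSup bdd1 ⟨M, hM, rfl⟩
    have le2 : (((1 - M) * (σ - (γ : ℂ) • ρ)).trace).re ≤ Emeas γ 𝓜 σ ρ :=
      le_csSup bdd2 ⟨1 - M, hM', rfl⟩
    rw [f_split] at le1
    rw [f_split, one_sub_trace M σ hσt, one_sub_trace M ρ hρt] at le2
    rw [f_split]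
    nlinarith
  have hpos : (0:ℝ) < γ + 1 := by linarith
  have hEle : Emeas 1 𝓜 ρ σ ≤ (Emeas γ 𝓜 ρ σ + Emeas γ 𝓜 σ ρ + γ - 1) / (γ + 1) := by
    apply csSup_le (hne.image _)
    rintro x ⟨M, hM, rfl⟩
    rw [le_div_iff₀ hpos]
    have := step M hM
    push_cast at this ⊢
    linarith
  calc (γ + 1) * Emeas 1 𝓜 ρ σ
      ≤ (γ + 1) * ((Emeas γ 𝓜 ρ σ + Emeas γ 𝓜 σ ρ + γ - 1) / (γ + 1)) :=
        mul_le_mul_of_nonneg_left hEle (le_of_lt hpos)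
    _ = Emeas γ 𝓜 ρ σ + Emeas γ 𝓜 σ ρ + γ - 1 := mul_div_cancel₀ _ (ne_of_gt hpos)
end
end

section
/- Let γ ≥ 1, let ρ and σ be states on ℂ^n, and let 𝓜 be a set of measurement operators (each M ∈ 𝓜 satisfies 0 ≤ M ≤ I) such that 0 ∈ 𝓜, I ∈ 𝓜, and 𝓜 is closed under coarse-graining: for all M₁, M₂ ∈ 𝓜 with M₁ + M₂ ≤ I one has M₁ + M₂ ∈ 𝓜. Then E_γ^𝓜(ρ‖σ) = Ê_γ^𝓜(ρ‖σ), where Ê_γ^𝓜(ρ‖σ) is the supremum, over all finite POVMs {M_x}_{x ∈ X} (finite families with each M_x ∈ 𝓜, M_x ≥ 0, and Σ_x M_x = I), of Σ_x max{0, Tr[M_x(ρ − γσ)]}. -/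
noncomputable section
open Matrix ComplexOrder

/-- Alternative measured hockey-stick divergence for γ ≥ 1: the supremum over all finite
POVMs `{M_x}` with elements in 𝓜 of `Σ_x max{0, Tr[M_x(ρ − γσ)]}`. -/
def Ehat {n : ℕ} (γ : ℝ) (𝓜 : Set (Mat n)) (ρ σ : Mat n) : ℝ :=
  sSup {s : ℝ | ∃ (k : ℕ) (M : Fin k → Mat n),
    (∀ x, M x ∈ 𝓜) ∧ (∀ x, (M x).PosSemidef) ∧ (∑ x, M x = 1) ∧
    s = ∑ x, max 0 (((M x * (ρ - (γ : ℂ) • σ)).trace).re)}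

lemma trace_nonneg_of_psd {n : ℕ} {M : Mat n} (hM : M.PosSemidef) :
    0 ≤ M.trace := by
  rw [Matrix.trace]
  apply Finset.sum_nonneg
  intro i _
  have hs : star (Pi.single i 1 : Fin n → ℂ) = Pi.single i 1 := by
    ext j; simp [Pi.single_apply, apply_ite]
  have := hM.dotProduct_mulVec_nonneg (Pi.single i 1)
  rw [hs] at this
  simpa [Matrix.mulVec_single, single_dotProduct] using this

lemma trace_mul_psd_nonneg {n : ℕ} {A B : Mat n}
    (hA : A.PosSemidef) (hB : B.PosSemidef) : 0 ≤ (A * B).trace := by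
  letI : PartialOrder (Mat n) := Matrix.instPartialOrder
  letI : StarOrderedRing (Mat n) := Matrix.instStarOrderedRing
  letI : NonnegSpectrumClass ℝ (Mat n) := Matrix.instNonnegSpectrumClass
  obtain ⟨X, hX, -, hXX⟩ := CFC.exists_sqrt_of_isSelfAdjoint_of_quasispectrumRestricts
    hA.isHermitian (QuasispectrumRestricts.nnreal_of_nonneg hA.nonneg)
  have hXh : Xᴴ = X := hX
  have h1 : (A * B).trace = (Xᴴ * B * X).trace := by
    rw [hXh]
    calc (A * B).trace = ((X * X) * B).trace := by rw [hXX]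
      _ = (X * (X * B)).trace := by rw [mul_assoc]
      _ = ((X * B) * X).trace := trace_mul_comm _ _
      _ = (X * B * X).trace := rfl
  rw [h1]
  exact trace_nonneg_of_psd (hB.conjTranspose_mul_mul_same X)

theorem stmt_2 {n : ℕ} (γ : ℝ) (hγ : 1 ≤ γ) (ρ σ : Mat n)
    (hρ : IsState ρ) (hσ : IsState σ) (𝓜 : Set (Mat n))
    (h𝓜 : ∀ M ∈ 𝓜, M.PosSemidef ∧ ((1 : Mat n) - M).PosSemidef)
    (h0 : (0 : Mat n) ∈ 𝓜) (h1 : (1 : Mat n) ∈ 𝓜)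
    (hcoarse : ∀ M₁ ∈ 𝓜, ∀ M₂ ∈ 𝓜, ((1 : Mat n) - (M₁ + M₂)).PosSemidef → M₁ + M₂ ∈ 𝓜) :
    Emeas γ 𝓜 ρ σ = Ehat γ 𝓜 ρ σ := by
  set Δ : Mat n := ρ - (γ : ℂ) • σ with hΔ
  set f : Mat n → ℝ := fun M => ((M * Δ).trace).re with hf
  set A : Set ℝ := (fun M => ((M * Δ).trace).re) '' M2 𝓜 with hA
  set B : Set ℝ := {s : ℝ | ∃ (k : ℕ) (M : Fin k → Mat n),
    (∀ x, M x ∈ 𝓜) ∧ (∀ x, (M x).PosSemidef) ∧ (∑ x, M x = 1) ∧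
    s = ∑ x, max 0 (((M x * Δ).trace).re)} with hB
  -- bound lemma
  have hbound : ∀ N : Mat n, N.PosSemidef → ((1 : Mat n) - N).PosSemidef → f N ≤ 1 := by
    intro N hN hN'
    have hexp : N * Δ = N * ρ - (γ : ℂ) • (N * σ) := by
      rw [hΔ, Matrix.mul_sub, Matrix.mul_smul]
    have hre : f N = ((N * ρ).trace).re - γ * ((N * σ).trace).re := by
      rw [hf]
      simp only [hexp, trace_sub, trace_smul, smul_eq_mul, Complex.sub_re,
        Complex.mul_re, Complex.ofReal_re, Complex.ofReal_im]
      ring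
    have hb : 0 ≤ ((N * σ).trace).re := by
      have := trace_mul_psd_nonneg hN hσ.1
      exact (Complex.le_def.mp this).1
    have ha : ((N * ρ).trace).re ≤ 1 := by
      have h2 : 0 ≤ (((1 : Mat n) - N) * ρ).trace := trace_mul_psd_nonneg hN' hρ.1
      have h3 : (((1 : Mat n) - N) * ρ).trace = 1 - (N * ρ).trace := by
        rw [Matrix.sub_mul, trace_sub, Matrix.one_mul, hρ.2]
      rw [h3] at h2
      have := (Complex.le_def.mp h2).1
      simp at this
      linarith
    rw [hre]
    nlinarith [hb, hγ]
  -- sums of subfamilies stay in 𝓜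
  have hsummem : ∀ (k : ℕ) (M : Fin k → Mat n), (∀ x, M x ∈ 𝓜) →
      (∀ x, (M x).PosSemidef) → (∑ x, M x = 1) →
      ∀ S : Finset (Fin k), (∑ x ∈ S, M x) ∈ 𝓜 := by
    intro k M hmem hpsd hsum S
    induction S using Finset.induction with
    | empty => simpa using h0
    | @insert a S ha ih =>
      rw [Finset.sum_insert ha]
      refine hcoarse _ (hmem a) _ ih ?_
      have he : (1 : Mat n) - (M a + ∑ x ∈ S, M x) = ∑ x ∈ (insert a S)ᶜ, M x := by
        rw [← Finset.sum_insert ha, eq_comm, eq_sub_iff_add_eq, ← hsum]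
        exact Finset.sum_compl_add_sum (insert a S) M
      rw [he]
      exact Finset.sum_induction _ _ (fun a b ha hb => ha.add hb)
        Matrix.PosSemidef.zero (fun x _ => hpsd x)
  -- B ⊆ A
  have hBA : B ⊆ A := by
    rintro s ⟨k, M, hmem, hpsd, hsum, rfl⟩
    classical
    set S : Finset (Fin k) := Finset.univ.filter (fun x => 0 < f (M x)) with hS
    refine ⟨∑ x ∈ S, M x, ⟨hsummem k M hmem hpsd hsum S, ?_⟩, ?_⟩
    · have he : (1 : Mat n) - ∑ x ∈ S, M x = ∑ x ∈ Sᶜ, M x := by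
        rw [eq_comm, eq_sub_iff_add_eq, ← hsum]
        exact Finset.sum_compl_add_sum S M
      rw [he]
      exact hsummem k M hmem hpsd hsum Sᶜ
    · have hlin : (((∑ x ∈ S, M x) * Δ).trace).re = ∑ x ∈ S, f (M x) := by
        rw [Finset.sum_mul, trace_sum, Complex.re_sum]
      show ((∑ x ∈ S, M x) * Δ).trace.re = _
      rw [hlin, hS, Finset.sum_filter]
      apply Finset.sum_congr rfl
      intro x _
      rcases lt_or_ge 0 (f (M x)) with h | h
      · have h' : 0 < (M x * Δ).trace.re := h
        simp [hf, h', max_eq_right h'.le]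
      · have h' : (M x * Δ).trace.re ≤ 0 := h
        simp [hf, not_lt.mpr h', max_eq_left h']
  -- membership in M2 gives PSD bounds
  have hM2psd : ∀ N ∈ M2 𝓜, N.PosSemidef ∧ ((1 : Mat n) - N).PosSemidef := by
    intro N hN
    exact ⟨(h𝓜 N hN.1).1, (h𝓜 N hN.1).2⟩
  have hA_bdd : BddAbove A := by
    refine ⟨1, ?_⟩
    rintro s ⟨N, hN, rfl⟩
    exact hbound N (hM2psd N hN).1 (hM2psd N hN).2
  have hA_ne : A.Nonempty := by
    refine ⟨f 0, 0, ⟨h0, by simpa using h1⟩, rfl⟩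
  have hB_bdd : BddAbove B := hA_bdd.mono hBA
  -- each element of A is dominated by an element of B
  have hAB : ∀ a ∈ A, ∃ b ∈ B, a ≤ b := by
    rintro a ⟨N, hN, rfl⟩
    refine ⟨max 0 (f N) + max 0 (f ((1 : Mat n) - N)), ⟨2, ![N, (1 : Mat n) - N], ?_, ?_, ?_, ?_⟩, ?_⟩
    · intro x; fin_cases x
      · exact hN.1
      · exact hN.2
    · intro x; fin_cases x
      · exact (hM2psd N hN).1
      · exact (hM2psd N hN).2
    · simp [Fin.sum_univ_two]
    · simp [Fin.sum_univ_two, hf]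
    · have h1' : f N ≤ max 0 (f N) := le_max_right _ _
      have h2' : 0 ≤ max 0 (f ((1 : Mat n) - N)) := le_max_left _ _
      calc ((N * Δ).trace).re = f N := rfl
        _ ≤ max 0 (f N) + max 0 (f ((1 : Mat n) - N)) := by linarith
  -- conclude
  apply le_antisymm
  · apply csSup_le hA_ne
    intro a ha
    obtain ⟨b, hb, hab⟩ := hAB a ha
    exact hab.trans (le_csSup hB_bdd hb)
  · have hB_ne : B.Nonempty :=
      ⟨max 0 (f 1), 1, fun _ => 1, fun _ => h1, fun _ => Matrix.PosSemidef.one,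
        by simp, by simp [hf]⟩
    exact csSup_le_csSup hA_bdd hB_ne hBA
end
end

section
/- Let γ ≥ 1 and let Γ^P and Γ^Q be positive semidefinite matrices on ℂ^{d_R} ⊗ ℂ^{d_B} whose partial traces over B equal the identity on R (Choi operators of channels), and set A := Γ^P − γ Γ^Q. Then the following SDP strong duality holds: sup{ Tr[Ω A] : Ω ≥ 0, ρ ≥ 0, Tr[ρ] = 1, Ω ≤ ρ ⊗ I_B, T_B(Ω) ≥ 0, T_B(Ω) ≤ ρ ⊗ I_B } = inf{ μ : μ ≥ 0, ∃ Z, L, Y ≥ 0 with A ≤ Z + T_B(Y − L) and μ·I_R ≥ Tr_B[Z] + Tr_B[Y] } (this common value equals the PPT-measured hockey-stick channel divergence E_γ^PPT(𝒫‖𝒬) of the corresponding channels). -/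
noncomputable section
open Matrix ComplexOrder Kronecker Complex

/-- Matrices on ℂ^{dR} ⊗ ℂ^{dB}, indexed by pairs (r, b). -/
abbrev RBMat (dR dB : ℕ) := Matrix (Fin dR × Fin dB) (Fin dR × Fin dB) ℂ

/-- The partial trace over the system B: `(Tr_B X)(r,r') := Σ_b X((r,b),(r',b))`. -/
def ptrB {dR dB : ℕ} (X : RBMat dR dB) : Matrix (Fin dR) (Fin dR) ℂ :=
  fun r r' => ∑ b : Fin dB, X (r, b) (r', b)

/-- The partial transpose on the system B:
`T_B(M)((r,b),(r',b')) := M((r,b'),(r',b))`. -/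
def ptB {dR dB : ℕ} (M : RBMat dR dB) : RBMat dR dB :=
  fun p q => M (p.1, q.2) (q.1, p.2)


namespace SDPAux

set_option linter.unusedSectionVars false

variable {n : Type*} [Fintype n] [DecidableEq n]

/-- real part of trace of a product -/
def rtr (X Y : Matrix n n ℂ) : ℝ := ((X * Y).trace).re

/-- entrywise real Frobenius pairing -/
def frob (X Y : Matrix n n ℂ) : ℝ := ∑ i, ∑ j, ((starRingEnd ℂ) (X i j) * Y i j).re

lemma trace_mul_sum (X Y : Matrix n n ℂ) :
    (X * Y).trace = ∑ p, ∑ q, X p q * Y q p := by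
  simp [Matrix.trace, Matrix.mul_apply, Matrix.diag]

lemma rtr_comm (X Y : Matrix n n ℂ) : rtr X Y = rtr Y X := by
  unfold rtr; rw [Matrix.trace_mul_comm]

lemma frob_eq_rtr {X : Matrix n n ℂ} (hX : X.IsHermitian) (Y : Matrix n n ℂ) :
    frob X Y = rtr X Y := by
  unfold frob rtr
  rw [trace_mul_sum, Complex.re_sum]
  rw [Finset.sum_comm]
  refine Finset.sum_congr rfl fun i _ => ?_
  rw [Complex.re_sum]
  refine Finset.sum_congr rfl fun j _ => ?_
  rw [show (starRingEnd ℂ) (X j i) = X i j from hX.apply i j]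

lemma re_trace_conjTranspose_mul_self_nonneg (M : Matrix n n ℂ) :
    0 ≤ ((Mᴴ * M).trace).re := by
  rw [trace_mul_sum, Complex.re_sum]
  refine Finset.sum_nonneg fun p _ => ?_
  rw [Complex.re_sum]
  refine Finset.sum_nonneg fun q _ => ?_
  simp only [Matrix.conjTranspose_apply]
  rw [show (star (M q p) * M q p) = (Complex.normSq (M q p) : ℂ) by
    rw [Complex.normSq_eq_conj_mul_self]; rfl]
  simpa using Complex.normSq_nonneg (M q p)

lemma psd_eq_star_mul {X : Matrix n n ℂ} (hX : X.PosSemidef) : ∃ B : Matrix n n ℂ, X = Bᴴ * B := by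
  open MatrixOrder in
  obtain ⟨Y, hY, -, rfl⟩ := CFC.exists_sqrt_of_isSelfAdjoint_of_quasispectrumRestricts hX.1
    (QuasispectrumRestricts.nnreal_of_nonneg hX.nonneg)
  exact ⟨Y, by rw [← Matrix.star_eq_conjTranspose, hY.star_eq]⟩

lemma rtr_nonneg {X Y : Matrix n n ℂ} (hX : X.PosSemidef) (hY : Y.PosSemidef) :
    0 ≤ rtr X Y := by
  obtain ⟨B, rfl⟩ := psd_eq_star_mul hX
  obtain ⟨C, rfl⟩ := psd_eq_star_mul hY
  unfold rtr
  have h : (Bᴴ * B * (Cᴴ * C)).trace = ((B * Cᴴ)ᴴ * (B * Cᴴ)).trace := by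
    rw [Matrix.conjTranspose_mul, Matrix.conjTranspose_conjTranspose]
    rw [show (Bᴴ * B * (Cᴴ * C)) = (Bᴴ * B * Cᴴ) * C by
      rw [Matrix.mul_assoc, Matrix.mul_assoc, Matrix.mul_assoc]]
    rw [Matrix.trace_mul_comm, Matrix.mul_assoc, Matrix.mul_assoc]
  rw [h]
  exact re_trace_conjTranspose_mul_self_nonneg _

lemma conj_quadratic {X : Matrix n n ℂ} (hX : X.IsHermitian) (v : n → ℂ) :
    (starRingEnd ℂ) (star v ⬝ᵥ X *ᵥ v) = star v ⬝ᵥ X *ᵥ v := by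
  have h : star v ⬝ᵥ X *ᵥ v = ∑ i, ∑ j, star (v i) * (X i j * v j) := by
    simp [dotProduct, Matrix.mulVec, Finset.mul_sum]
  rw [h, starRingEnd_apply, star_sum]
  rw [Finset.sum_comm]
  refine Finset.sum_congr rfl fun i _ => ?_
  rw [star_sum]
  refine Finset.sum_congr rfl fun j _ => ?_
  simp only [star_mul', star_star]
  rw [show star (X i j) = X j i from hX.apply j i]
  ring

lemma psd_of_re_quadratic {X : Matrix n n ℂ} (hX : X.IsHermitian)
    (h : ∀ v : n → ℂ, 0 ≤ (star v ⬝ᵥ X *ᵥ v).re) : X.PosSemidef := by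
  refine Matrix.PosSemidef.of_dotProduct_mulVec_nonneg hX fun v => ?_
  have him : (star v ⬝ᵥ X *ᵥ v).im = 0 := by
    have := conj_quadratic hX v
    have h2 := congrArg Complex.im this
    simpa using by linarith [Complex.conj_im (star v ⬝ᵥ X *ᵥ v) ▸ h2]
  rw [Complex.le_def]
  exact ⟨by simpa using h v, by simp [him]⟩

lemma quadratic_eq_rtr (X : Matrix n n ℂ) (v : n → ℂ) :
    star v ⬝ᵥ X *ᵥ v = (Matrix.vecMulVec v (star v) * X).trace := by
  rw [trace_mul_sum]
  simp only [dotProduct, Matrix.mulVec, Matrix.vecMulVec_apply, Pi.star_apply,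
    dotProduct]
  rw [Finset.sum_comm]
  refine Finset.sum_congr rfl fun i _ => ?_
  rw [Finset.mul_sum]
  refine Finset.sum_congr rfl fun j _ => ?_
  ring

lemma posSemidef_vecMulVec_star (v : n → ℂ) : (Matrix.vecMulVec v (star v)).PosSemidef := by
  have h : Matrix.vecMulVec v (star v) = Matrix.replicateCol Unit v * (Matrix.replicateCol Unit v)ᴴ := by
    ext i j
    simp [Matrix.vecMulVec_apply, Matrix.mul_apply, Matrix.replicateCol, Matrix.conjTranspose_apply]
  rw [h]
  exact Matrix.posSemidef_self_mul_conjTranspose _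

lemma psd_of_tests {X : Matrix n n ℂ} (hX : X.IsHermitian)
    (h : ∀ σ : Matrix n n ℂ, σ.PosSemidef → 0 ≤ rtr σ X) : X.PosSemidef := by
  refine psd_of_re_quadratic hX fun v => ?_
  have := h _ (posSemidef_vecMulVec_star v)
  rwa [rtr, ← quadratic_eq_rtr] at this

lemma psd_diag_nonneg {X : Matrix n n ℂ} (hX : X.PosSemidef) (i : n) : 0 ≤ X i i := by
  have := hX.dotProduct_mulVec_nonneg (Pi.single i 1)
  simpa [dotProduct, Matrix.mulVec, Pi.single_apply, Finset.sum_ite_eq,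
    dotProduct_single] using this

lemma psd_trace_eq_re {X : Matrix n n ℂ} (hX : X.PosSemidef) :
    X.trace = ((X.trace).re : ℂ) ∧ 0 ≤ (X.trace).re := by
  have h : (0:ℂ) ≤ X.trace := Finset.sum_nonneg fun i _ => psd_diag_nonneg hX i
  rw [Complex.le_def] at h
  constructor
  · apply Complex.ext <;> simp [h.2.symm]
  · simpa using h.1

lemma psd_eq_zero_of_trace {X : Matrix n n ℂ} (hX : X.PosSemidef) (h0 : (X.trace).re = 0) :
    X = 0 := by
  have hdiag : ∀ i, X i i = 0 := by
    have hre : ∀ i, (X i i).re = 0 := by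
      have : ∑ i, (X i i).re = 0 := by
        rw [← Complex.re_sum]; exact h0
      intro i
      have hnn : ∀ j ∈ Finset.univ, 0 ≤ ((X j j).re) := fun j _ =>
        (Complex.le_def.mp (psd_diag_nonneg hX j)).1
      exact (Finset.sum_eq_zero_iff_of_nonneg hnn).mp this i (Finset.mem_univ i)
    intro i
    have him := (Complex.le_def.mp (psd_diag_nonneg hX i)).2
    exact Complex.ext (hre i) him.symm
  ext j i
  have hz : star (Pi.single i 1) ⬝ᵥ X *ᵥ (Pi.single i 1) = 0 := by
    have : star (Pi.single i (1:ℂ)) ⬝ᵥ X *ᵥ (Pi.single i 1) = X i i := by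
      simp [dotProduct, Matrix.mulVec, Pi.single_apply, Finset.sum_ite_eq]
    rw [this, hdiag i]
  have := (hX.dotProduct_mulVec_zero_iff (Pi.single i 1)).mp hz
  have := congrFun this j
  simpa [Matrix.mulVec_single] using this

lemma psd_real_smul {X : Matrix n n ℂ} (hX : X.PosSemidef) {c : ℝ} (hc : 0 ≤ c) :
    ((c : ℂ) • X).PosSemidef := by
  refine Matrix.PosSemidef.of_dotProduct_mulVec_nonneg ?_ ?_
  · unfold Matrix.IsHermitian
    rw [Matrix.conjTranspose_smul, hX.1]
    congr 1
    simp [Complex.conj_ofReal]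
  · intro v
    rw [Matrix.smul_mulVec, dotProduct_smul]
    have h1 : (0:ℂ) ≤ (c:ℂ) := by
      rw [Complex.le_def]; simp [hc]
    have := hX.dotProduct_mulVec_nonneg v
    calc (0:ℂ) = (c:ℂ) * 0 := by ring
    _ ≤ (c:ℂ) * (star v ⬝ᵥ X *ᵥ v) := by
        exact mul_le_mul_of_nonneg_left this h1
    _ = (c:ℂ) • (star v ⬝ᵥ X *ᵥ v) := by simp [smul_eq_mul]

lemma psd_zero_of_psd_neg {X : Matrix n n ℂ} (hX : X.PosSemidef) (hX' : (-X).PosSemidef) :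
    X = 0 := by
  apply psd_eq_zero_of_trace hX
  have h1 := (psd_trace_eq_re hX).2
  have h2 := (psd_trace_eq_re hX').2
  rw [Matrix.trace_neg] at h2
  simp only [Complex.neg_re] at h2
  linarith

/-- the Hermitian part of a matrix -/
def hermPart (X : Matrix n n ℂ) : Matrix n n ℂ := (2⁻¹ : ℂ) • (X + Xᴴ)

lemma hermPart_isHermitian (X : Matrix n n ℂ) : (hermPart X).IsHermitian := by
  unfold Matrix.IsHermitian hermPart
  rw [Matrix.conjTranspose_smul, Matrix.conjTranspose_add, Matrix.conjTranspose_conjTranspose]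
  rw [add_comm]
  congr 1
  simp [starRingEnd_apply]

lemma hermPart_of_isHermitian {X : Matrix n n ℂ} (hX : X.IsHermitian) : hermPart X = X := by
  unfold hermPart
  rw [hX]
  rw [← two_smul ℂ X, smul_smul]
  norm_num

lemma trace_mul_conjTranspose_of_isHermitian {T X : Matrix n n ℂ} (hT : T.IsHermitian) :
    (T * Xᴴ).trace = (starRingEnd ℂ) ((T * X).trace) := by
  rw [trace_mul_sum, trace_mul_sum, map_sum]
  rw [Finset.sum_comm]
  refine Finset.sum_congr rfl fun p _ => ?_
  rw [map_sum]
  refine Finset.sum_congr rfl fun q _ => ?_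
  rw [Matrix.conjTranspose_apply, _root_.map_mul]
  rw [show (starRingEnd ℂ) (T p q) = T q p from hT.apply q p]
  rfl

lemma rtr_hermPart {T X : Matrix n n ℂ} (hT : T.IsHermitian) :
    rtr T (hermPart X) = rtr T X := by
  unfold rtr hermPart
  rw [Matrix.mul_smul, Matrix.trace_smul, Matrix.mul_add, Matrix.trace_add,
    trace_mul_conjTranspose_of_isHermitian hT]
  rw [Complex.add_conj, smul_eq_mul]
  simp [Complex.mul_re]

lemma hermPart_psd_of_tests {X : Matrix n n ℂ}
    (h : ∀ σ : Matrix n n ℂ, σ.PosSemidef → 0 ≤ rtr σ X) : (hermPart X).PosSemidef :=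
  psd_of_tests (hermPart_isHermitian X)
    (fun σ hσ => by rw [rtr_hermPart hσ.1]; exact h σ hσ)

lemma psd_one : (1 : Matrix n n ℂ).PosSemidef := by
  have h : (1 : Matrix n n ℂ) = (1 : Matrix n n ℂ)ᴴ * 1 := by simp
  rw [h]
  exact Matrix.posSemidef_conjTranspose_mul_self _

lemma rtr_add_right (X Y Z : Matrix n n ℂ) : rtr X (Y + Z) = rtr X Y + rtr X Z := by
  unfold rtr
  rw [Matrix.mul_add, Matrix.trace_add, Complex.add_re]

lemma rtr_sub_right (X Y Z : Matrix n n ℂ) : rtr X (Y - Z) = rtr X Y - rtr X Z := by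
  unfold rtr
  rw [Matrix.mul_sub, Matrix.trace_sub, Complex.sub_re]

lemma rtr_neg_right (X Y : Matrix n n ℂ) : rtr X (-Y) = -rtr X Y := by
  unfold rtr
  rw [Matrix.mul_neg, Matrix.trace_neg, Complex.neg_re]

lemma rtr_neg_left (X Y : Matrix n n ℂ) : rtr (-X) Y = -rtr X Y := by
  unfold rtr
  rw [Matrix.neg_mul, Matrix.trace_neg, Complex.neg_re]

lemma rtr_zero_right (X : Matrix n n ℂ) : rtr X 0 = 0 := by
  unfold rtr
  rw [Matrix.mul_zero, Matrix.trace_zero]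
  rfl

lemma rtr_rsmul_left (c : ℝ) (X Y : Matrix n n ℂ) : rtr ((c : ℂ) • X) Y = c * rtr X Y := by
  unfold rtr
  rw [Matrix.smul_mul, Matrix.trace_smul, smul_eq_mul, Complex.re_ofReal_mul]

lemma rtr_rsmul_right (c : ℝ) (X Y : Matrix n n ℂ) : rtr X ((c : ℂ) • Y) = c * rtr X Y := by
  unfold rtr
  rw [Matrix.mul_smul, Matrix.trace_smul, smul_eq_mul, Complex.re_ofReal_mul]

lemma frob_zero_left (Y : Matrix n n ℂ) : frob 0 Y = 0 := by
  unfold frob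
  simp

lemma hermPart_add (X Y : Matrix n n ℂ) : hermPart (X + Y) = hermPart X + hermPart Y := by
  unfold hermPart
  rw [Matrix.conjTranspose_add, ← smul_add]
  rw [show (X + Y + (Xᴴ + Yᴴ)) = (X + Xᴴ + (Y + Yᴴ)) by abel, smul_add]

lemma hermPart_neg (X : Matrix n n ℂ) : hermPart (-X) = -hermPart X := by
  unfold hermPart
  rw [Matrix.conjTranspose_neg]
  rw [show (-X + -Xᴴ) = -(X + Xᴴ) by abel, smul_neg]

lemma hermPart_trace (X : Matrix n n ℂ) : (hermPart X).trace = (((X.trace).re : ℝ) : ℂ) := by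
  unfold hermPart
  rw [Matrix.trace_smul, Matrix.trace_add, Matrix.trace_conjTranspose]
  rw [show star X.trace = (starRingEnd ℂ) X.trace from rfl, Complex.add_conj, smul_eq_mul]
  push_cast
  ring

section RB
variable {dR dB : ℕ}

lemma ptB_zero : ptB (0 : RBMat dR dB) = 0 := rfl

lemma ptB_add (X Y : RBMat dR dB) : ptB (X + Y) = ptB X + ptB Y := rfl

lemma ptB_sub (X Y : RBMat dR dB) : ptB (X - Y) = ptB X - ptB Y := rfl

lemma ptB_smul (c : ℂ) (X : RBMat dR dB) : ptB (c • X) = c • ptB X := rfl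

lemma ptB_neg (X : RBMat dR dB) : ptB (-X) = -ptB X := rfl

lemma ptB_conjTranspose (X : RBMat dR dB) : ptB (Xᴴ) = (ptB X)ᴴ := rfl

lemma ptB_isHermitian {X : RBMat dR dB} (hX : X.IsHermitian) : (ptB X).IsHermitian := by
  unfold Matrix.IsHermitian
  rw [← ptB_conjTranspose, hX]

lemma hermPart_ptB (X : RBMat dR dB) : hermPart (ptB X) = ptB (hermPart X) := by
  unfold hermPart
  rw [ptB_smul, ptB_add, ptB_conjTranspose]

/-- the index-swap equivalence implementing the partial transpose -/
def swapE : ((Fin dR × Fin dB) × (Fin dR × Fin dB)) ≃ ((Fin dR × Fin dB) × (Fin dR × Fin dB)) where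
  toFun x := ((x.1.1, x.2.2), (x.2.1, x.1.2))
  invFun x := ((x.1.1, x.2.2), (x.2.1, x.1.2))
  left_inv := by rintro ⟨⟨r, b⟩, ⟨s, c⟩⟩; rfl
  right_inv := by rintro ⟨⟨r, b⟩, ⟨s, c⟩⟩; rfl

lemma trace_mul_sum' {m : Type*} [Fintype m] [DecidableEq m] (X Y : Matrix m m ℂ) :
    (X * Y).trace = ∑ x : m × m, X x.1 x.2 * Y x.2 x.1 := by
  rw [trace_mul_sum]
  exact (Fintype.sum_prod_type (f := fun x => X x.1 x.2 * Y x.2 x.1)).symm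

lemma trace_ptB_mul (X M : RBMat dR dB) : (ptB X * M).trace = (X * ptB M).trace := by
  rw [trace_mul_sum', trace_mul_sum']
  refine Fintype.sum_equiv (swapE (dR := dR) (dB := dB)) _ _ ?_
  rintro ⟨⟨r, b⟩, ⟨s, c⟩⟩
  rfl

lemma psd_sum {m ι : Type*} [Fintype m] (s : Finset ι) (g : ι → Matrix m m ℂ)
    (h : ∀ i ∈ s, (g i).PosSemidef) : (∑ i ∈ s, g i).PosSemidef := by
  classical
  induction s using Finset.induction_on with
  | empty => simpa using Matrix.PosSemidef.zero
  | insert _ _ hni ih =>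
      rw [Finset.sum_insert hni]
      exact (h _ (Finset.mem_insert_self _ _)).add
        (ih fun i hi => h i (Finset.mem_insert_of_mem hi))

lemma ptrB_zero : ptrB (0 : RBMat dR dB) = 0 := by
  funext r r'; simp [ptrB]

lemma ptrB_add (X Y : RBMat dR dB) : ptrB (X + Y) = ptrB X + ptrB Y := by
  funext r r'; simp [ptrB, Finset.sum_add_distrib]

lemma ptrB_smul (c : ℂ) (X : RBMat dR dB) : ptrB (c • X) = c • ptrB X := by
  funext r r'
  simp only [ptrB, Matrix.smul_apply, smul_eq_mul, Finset.mul_sum]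

lemma ptrB_isHermitian {X : RBMat dR dB} (hX : X.IsHermitian) : (ptrB X).IsHermitian := by
  unfold Matrix.IsHermitian
  funext r r'
  simp only [Matrix.conjTranspose_apply, ptrB, star_sum]
  exact Finset.sum_congr rfl fun b _ => hX.apply _ _

lemma trace_ptrB (X : RBMat dR dB) : (ptrB X).trace = X.trace := by
  unfold Matrix.trace Matrix.diag ptrB
  exact (Fintype.sum_prod_type (f := fun p => X p p)).symm

lemma psd_ptrB {X : RBMat dR dB} (hX : X.PosSemidef) : (ptrB X).PosSemidef := by
  have h : ptrB X = ∑ b : Fin dB, X.submatrix (fun r => (r, b)) (fun r => (r, b)) := by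
    funext r r'
    rw [Matrix.sum_apply]
    simp [ptrB, Matrix.submatrix_apply]
  rw [h]
  exact psd_sum _ _ fun b _ => hX.submatrix _

lemma kron_one_apply (ρ : Matrix (Fin dR) (Fin dR) ℂ) (p q : Fin dR × Fin dB) :
    (ρ ⊗ₖ (1 : Matrix (Fin dB) (Fin dB) ℂ)) p q = ρ p.1 q.1 * (1 : Matrix (Fin dB) (Fin dB) ℂ) p.2 q.2 :=
  Matrix.kroneckerMap_apply _ _ _ _ _

lemma kron_one_conjTranspose (ρ : Matrix (Fin dR) (Fin dR) ℂ) :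
    (ρ ⊗ₖ (1 : Matrix (Fin dB) (Fin dB) ℂ))ᴴ = ρᴴ ⊗ₖ (1 : Matrix (Fin dB) (Fin dB) ℂ) := by
  funext p q
  rw [Matrix.conjTranspose_apply, kron_one_apply, kron_one_apply, Matrix.conjTranspose_apply]
  rw [star_mul']
  congr 1
  rcases p with ⟨r, b⟩; rcases q with ⟨s, c⟩
  by_cases h : b = c <;> simp [Matrix.one_apply, h, eq_comm]

lemma kron_one_add (ρ σ : Matrix (Fin dR) (Fin dR) ℂ) :
    ((ρ + σ) ⊗ₖ (1 : Matrix (Fin dB) (Fin dB) ℂ)) = ρ ⊗ₖ 1 + σ ⊗ₖ 1 :=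
  Matrix.add_kronecker _ _ _

lemma kron_one_smul (c : ℂ) (ρ : Matrix (Fin dR) (Fin dR) ℂ) :
    ((c • ρ) ⊗ₖ (1 : Matrix (Fin dB) (Fin dB) ℂ)) = c • (ρ ⊗ₖ 1) :=
  Matrix.smul_kronecker _ _ _

lemma kron_one_sub (ρ σ : Matrix (Fin dR) (Fin dR) ℂ) :
    ((ρ - σ) ⊗ₖ (1 : Matrix (Fin dB) (Fin dB) ℂ)) = ρ ⊗ₖ 1 - σ ⊗ₖ 1 := by
  rw [sub_eq_add_neg, sub_eq_add_neg, kron_one_add]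
  congr 1
  rw [show (-σ : Matrix (Fin dR) (Fin dR) ℂ) = (-1 : ℂ) • σ by simp, kron_one_smul]
  simp

lemma hermPart_kron_one (ρ : Matrix (Fin dR) (Fin dR) ℂ) :
    hermPart (ρ ⊗ₖ (1 : Matrix (Fin dB) (Fin dB) ℂ)) = (hermPart ρ) ⊗ₖ 1 := by
  unfold hermPart
  rw [kron_one_conjTranspose, ← kron_one_add, ← kron_one_smul]

lemma psd_kron_one {ρ : Matrix (Fin dR) (Fin dR) ℂ} (hρ : ρ.PosSemidef) :
    (ρ ⊗ₖ (1 : Matrix (Fin dB) (Fin dB) ℂ)).PosSemidef := by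
  obtain ⟨B, rfl⟩ := psd_eq_star_mul hρ
  have h : ((Bᴴ * B) ⊗ₖ (1 : Matrix (Fin dB) (Fin dB) ℂ))
      = (B ⊗ₖ (1 : Matrix (Fin dB) (Fin dB) ℂ))ᴴ * (B ⊗ₖ 1) := by
    rw [kron_one_conjTranspose, ← Matrix.mul_kronecker_mul, Matrix.one_mul]
  rw [h]
  exact Matrix.posSemidef_conjTranspose_mul_self _

lemma trace_kron_one_mul (ρ : Matrix (Fin dR) (Fin dR) ℂ) (Z : RBMat dR dB) :
    ((ρ ⊗ₖ (1 : Matrix (Fin dB) (Fin dB) ℂ)) * Z).trace = (ρ * ptrB Z).trace := by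
  rw [trace_mul_sum', trace_mul_sum]
  simp only [Matrix.kroneckerMap_apply, Matrix.one_apply]
  simp only [Fintype.sum_prod_type]
  refine Finset.sum_congr rfl fun r _ => ?_
  rw [Finset.sum_comm]
  refine Finset.sum_congr rfl fun s _ => ?_
  simp only [ptrB, Finset.mul_sum]
  refine Finset.sum_congr rfl fun b _ => ?_
  simp

end RB

section Closed

variable {E F : Type*} [NormedAddCommGroup E] [NormedSpace ℝ E] [FiniteDimensional ℝ E]
  [NormedAddCommGroup F] [NormedSpace ℝ F]

lemma isClosed_image_cone (f : E →ₗ[ℝ] F) (C : Set E) (hC : IsClosed C)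
    (hsmul : ∀ c : ℝ, 0 ≤ c → ∀ x ∈ C, c • x ∈ C)
    (hker : ∀ x ∈ C, f x = 0 → x = 0) : IsClosed (f '' C) := by
  have hfc : Continuous f := f.continuous_of_finiteDimensional
  by_cases hnz : ∃ x ∈ C, x ≠ 0
  · -- get the positive lower bound δ
    obtain ⟨x₀, hx₀C, hx₀⟩ := hnz
    have hSne : (C ∩ Metric.sphere 0 1).Nonempty := by
      refine ⟨‖x₀‖⁻¹ • x₀, hsmul _ (by positivity) _ hx₀C, ?_⟩
      simp [norm_smul, norm_ne_zero_iff.mpr hx₀]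
    have hScpt : IsCompact (C ∩ Metric.sphere 0 1) :=
      (isCompact_sphere (0 : E) 1).inter_left hC
    obtain ⟨z, hzS, hz⟩ := hScpt.exists_isMinOn hSne
      (continuous_norm.comp hfc).continuousOn
    set δ := ‖f z‖ with hδ
    have hδpos : 0 < δ := by
      rw [hδ, norm_pos_iff]
      intro h0
      have := hker z hzS.1 h0
      rw [this] at hzS
      simpa using hzS.2
    have hbound : ∀ x ∈ C, δ * ‖x‖ ≤ ‖f x‖ := by
      intro x hxC
      rcases eq_or_ne x 0 with rfl | hx
      · simp
      · have hu : ‖x‖⁻¹ • x ∈ C ∩ Metric.sphere 0 1 :=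
          ⟨hsmul _ (by positivity) _ hxC, by simp [norm_smul, norm_ne_zero_iff.mpr hx]⟩
        have h3 : δ ≤ ‖f (‖x‖⁻¹ • x)‖ := hz hu
        have hfu : ‖f (‖x‖⁻¹ • x)‖ = ‖x‖⁻¹ * ‖f x‖ := by
          rw [f.map_smul, norm_smul]
          simp
        rw [hfu] at h3
        rename' h3 => this
        have hxn : 0 < ‖x‖ := norm_pos_iff.mpr hx
        calc δ * ‖x‖ ≤ (‖x‖⁻¹ * ‖f x‖) * ‖x‖ := by
              exact mul_le_mul_of_nonneg_right this hxn.le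
          _ = ‖f x‖ := by field_simp
    -- sequential closedness
    refine IsSeqClosed.isClosed ?_
    intro v p hv hvp
    have hpre : ∀ k, ∃ u ∈ C, f u = v k := fun k => hv k
    choose u huC hufu using hpre
    obtain ⟨M, hM⟩ : ∃ M : ℝ, ∀ k, ‖v k‖ ≤ M := by
      have : Bornology.IsBounded (Set.range v) := hvp.cauchySeq.isBounded_range
      obtain ⟨M, hM⟩ := this.exists_norm_le
      exact ⟨M, fun k => hM _ (Set.mem_range_self k)⟩
    have hub : ∀ k, u k ∈ Metric.closedBall (0 : E) (δ⁻¹ * M) := by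
      intro k
      rw [Metric.mem_closedBall, dist_zero_right]
      have h1 := hbound _ (huC k)
      rw [hufu k] at h1
      have h2 : δ * ‖u k‖ ≤ M := h1.trans (hM k)
      rw [← le_div_iff₀' hδpos] at h2
      simpa [div_eq_inv_mul] using h2
    obtain ⟨l, hl, φ, hφ, hconv⟩ := tendsto_subseq_of_bounded
      Metric.isBounded_closedBall hub
    refine ⟨l, hC.mem_of_tendsto hconv (Filter.Eventually.of_forall fun k => huC _), ?_⟩
    have h1 : Filter.Tendsto (fun k => f (u (φ k))) Filter.atTop (nhds (f l)) :=
      (hfc.tendsto l).comp hconv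
    have h2 : Filter.Tendsto (fun k => f (u (φ k))) Filter.atTop (nhds p) := by
      simp only [hufu]
      exact hvp.comp hφ.tendsto_atTop
    exact tendsto_nhds_unique h1 h2
  · push_neg at hnz
    have : f '' C ⊆ {0} := by
      rintro - ⟨x, hx, rfl⟩
      simp [hnz x hx]
    rcases Set.subset_singleton_iff_eq.mp this with h | h <;> rw [h]
    · exact isClosed_empty
    · exact isClosed_singleton

end Closed

section Sep

variable {dR dB : ℕ}

abbrev ιH (dR dB : ℕ) :=
  ((Fin dR × Fin dB) × (Fin dR × Fin dB)) ⊕ (Fin dR × Fin dR)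

abbrev HS (dR dB : ℕ) := PiLp 2 (fun _ : ιH dR dB => ℂ)

abbrev ιD (dR dB : ℕ) :=
  (Fin 4 × ((Fin dR × Fin dB) × (Fin dR × Fin dB))) ⊕ (Fin dR × Fin dR)

abbrev ED (dR dB : ℕ) := PiLp 2 (fun _ : ιD dR dB => ℂ)

def emb (F : RBMat dR dB) (G : Matrix (Fin dR) (Fin dR) ℂ) : HS dR dB :=
  WithLp.toLp 2 (fun i => Sum.elim (fun pq : (Fin dR × Fin dB) × (Fin dR × Fin dB) => F pq.1 pq.2)
    (fun rr : Fin dR × Fin dR => G rr.1 rr.2) i)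

def mΩ (y : HS dR dB) : RBMat dR dB := fun p q => y (Sum.inl (p, q))

def mρ (y : HS dR dB) : Matrix (Fin dR) (Fin dR) ℂ := fun r r' => y (Sum.inr (r, r'))

lemma emb_add (F₁ F₂ : RBMat dR dB) (G₁ G₂ : Matrix (Fin dR) (Fin dR) ℂ) :
    emb (F₁ + F₂) (G₁ + G₂) = emb F₁ G₁ + emb F₂ G₂ := by
  refine PiLp.ext fun i => ?_; cases i <;> rfl

lemma emb_rsmul (c : ℝ) (F : RBMat dR dB) (G : Matrix (Fin dR) (Fin dR) ℂ) :
    emb (c • F) (c • G) = c • emb F G := by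
  refine PiLp.ext fun i => ?_; cases i <;> rfl

lemma inner_emb (F : RBMat dR dB) (G : Matrix (Fin dR) (Fin dR) ℂ) (y : HS dR dB) :
    inner ℝ (emb F G) y = frob F (mΩ y) + frob G (mρ y) := by
  rw [PiLp.inner_apply, Fintype.sum_sum_type]
  congr 1
  · rw [frob,
      show (∑ a : (Fin dR × Fin dB) × (Fin dR × Fin dB),
          inner ℝ (emb F G (Sum.inl a)) (y (Sum.inl a)))
        = ∑ a : (Fin dR × Fin dB) × (Fin dR × Fin dB),
            ((starRingEnd ℂ) (F a.1 a.2) * mΩ y a.1 a.2).re from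
        Finset.sum_congr rfl fun a _ => (Complex.inner _ _).trans (congrArg Complex.re (mul_comm _ _))]
    exact Fintype.sum_prod_type _
  · rw [frob,
      show (∑ a : Fin dR × Fin dR, inner ℝ (emb F G (Sum.inr a)) (y (Sum.inr a)))
        = ∑ a : Fin dR × Fin dR, ((starRingEnd ℂ) (G a.1 a.2) * mρ y a.1 a.2).re from
        Finset.sum_congr rfl fun a _ => (Complex.inner _ _).trans (congrArg Complex.re (mul_comm _ _))]
    exact Fintype.sum_prod_type _

def mk4 (k : Fin 4) (x : ED dR dB) : RBMat dR dB := fun p q => x (Sum.inl (k, (p, q)))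

def mσ (x : ED dR dB) : Matrix (Fin dR) (Fin dR) ℂ := fun r r' => x (Sum.inr (r, r'))

def embD (Z L Y W : RBMat dR dB) (σ : Matrix (Fin dR) (Fin dR) ℂ) : ED dR dB :=
  WithLp.toLp 2 (fun i => Sum.elim (fun t : Fin 4 × ((Fin dR × Fin dB) × (Fin dR × Fin dB)) =>
    ![Z, L, Y, W] t.1 t.2.1 t.2.2) (fun rr : Fin dR × Fin dR => σ rr.1 rr.2) i)

lemma rsmul_eq {m : Type*} (c : ℝ) (X : Matrix m m ℂ) : c • X = (c : ℂ) • X := by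
  funext i j
  simp [Matrix.smul_apply, Complex.real_smul]

lemma ptrB_rsmul (c : ℝ) (X : RBMat dR dB) : ptrB (c • X) = c • ptrB X := by
  rw [rsmul_eq, rsmul_eq, ptrB_smul]

/-- the constraint cone in the domain space -/
def CD (dR dB : ℕ) : Set (ED dR dB) :=
  {x | (mk4 0 x).PosSemidef ∧ (mk4 1 x).PosSemidef ∧ (mk4 2 x).PosSemidef ∧
    (mk4 3 x).PosSemidef ∧ (mσ x).PosSemidef}

/-- the linear map whose image (intersected with the cone) is the dual feasible region -/
def fD (dR dB : ℕ) : ED dR dB →ₗ[ℝ] HS dR dB where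
  toFun x := emb (mk4 0 x + ptB (mk4 2 x - mk4 1 x) - mk4 3 x)
    (ptrB (mk4 0 x) + ptrB (mk4 2 x) + mσ x)
  map_add' x y := by
    have h0 : ∀ k : Fin 4, mk4 k (x + y) = mk4 k x + mk4 k y := fun _ => rfl
    have hσ : mσ (x + y) = mσ x + mσ y := rfl
    rw [h0 0, h0 1, h0 2, h0 3, hσ]
    rw [show (mk4 2 x + mk4 2 y) - (mk4 1 x + mk4 1 y)
      = (mk4 2 x - mk4 1 x) + (mk4 2 y - mk4 1 y) by abel]
    rw [ptB_add, ptrB_add, ptrB_add]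
    rw [← emb_add]
    congr 1 <;> abel
  map_smul' c x := by
    have h0 : ∀ k : Fin 4, mk4 k (c • x) = c • mk4 k x := fun _ => rfl
    have hσ : mσ (c • x) = c • mσ x := rfl
    rw [h0 0, h0 1, h0 2, h0 3, hσ]
    rw [show c • mk4 2 x - c • mk4 1 x = c • (mk4 2 x - mk4 1 x) by
      rw [smul_sub]]
    rw [show ptB (c • (mk4 2 x - mk4 1 x)) = c • ptB (mk4 2 x - mk4 1 x) from rfl]
    rw [ptrB_rsmul, ptrB_rsmul]
    rw [show c • mk4 0 x + c • ptB (mk4 2 x - mk4 1 x) - c • mk4 3 x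
      = c • (mk4 0 x + ptB (mk4 2 x - mk4 1 x) - mk4 3 x) by
        rw [smul_sub, smul_add]]
    rw [show c • ptrB (mk4 0 x) + c • ptrB (mk4 2 x) + c • mσ x
      = c • (ptrB (mk4 0 x) + ptrB (mk4 2 x) + mσ x) by
        rw [smul_add, smul_add]]
    rw [emb_rsmul]
    rfl

lemma coord_continuous (i : ιD dR dB) : Continuous fun x : ED dR dB => x i :=
  LinearMap.continuous_of_finiteDimensional
    ({ toFun := fun x : ED dR dB => x i, map_add' := fun _ _ => rfl,
       map_smul' := fun _ _ => rfl } : ED dR dB →ₗ[ℝ] ℂ)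

lemma isClosed_psd_pullback {X : Type*} [TopologicalSpace X] {m : Type*} [Fintype m]
    [DecidableEq m] (g : X → Matrix m m ℂ) (hg : ∀ i j, Continuous fun x => g x i j) :
    IsClosed {x | (g x).PosSemidef} := by
  have hq : ∀ v : m → ℂ, Continuous fun x => star v ⬝ᵥ (g x) *ᵥ v := by
    intro v
    have h : (fun x => star v ⬝ᵥ (g x) *ᵥ v)
        = fun x => ∑ i, star (v i) * ∑ j, g x i j * v j := by
      funext x; simp [dotProduct, Matrix.mulVec]
    rw [h]
    exact continuous_finset_sum _ fun i _ => continuous_const.mul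
      (continuous_finset_sum _ fun j _ => (hg i j).mul continuous_const)
  have hH : IsClosed {x | (g x).IsHermitian} := by
    have h : {x | (g x).IsHermitian} = ⋂ i, ⋂ j, {x | star (g x j i) = g x i j} := by
      ext x
      simp only [Set.mem_setOf_eq, Set.mem_iInter]
      exact ⟨fun h i j => h.apply i j, fun h => Matrix.IsHermitian.ext fun i j => h i j⟩
    rw [h]
    exact isClosed_iInter fun i => isClosed_iInter fun j =>
      isClosed_eq (continuous_star.comp (hg j i)) (hg i j)
  have hP : IsClosed (⋂ v : m → ℂ, {x | 0 ≤ star v ⬝ᵥ (g x) *ᵥ v}) := by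
    refine isClosed_iInter fun v => ?_
    have h : {x | 0 ≤ star v ⬝ᵥ (g x) *ᵥ v}
        = {x | 0 ≤ (star v ⬝ᵥ (g x) *ᵥ v).re} ∩ {x | (star v ⬝ᵥ (g x) *ᵥ v).im = 0} := by
      ext x
      rw [Set.mem_setOf_eq, Complex.le_def]
      simp [eq_comm]
    rw [h]
    exact (isClosed_le continuous_const (Complex.continuous_re.comp (hq v))).inter
      (isClosed_eq (Complex.continuous_im.comp (hq v)) continuous_const)
  have h : {x : X | (g x).PosSemidef}
      = {x | (g x).IsHermitian} ∩ ⋂ v : m → ℂ, {x | 0 ≤ star v ⬝ᵥ (g x) *ᵥ v} := by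
    ext x
    simp only [Set.mem_setOf_eq, Set.mem_inter_iff, Set.mem_iInter]
    exact Matrix.posSemidef_iff_dotProduct_mulVec.trans ⟨fun h => ⟨h.1, fun v => h.2 v⟩, fun h => ⟨h.1, fun v => h.2 v⟩⟩
  rw [h]
  exact hH.inter hP

lemma isClosed_CD : IsClosed (CD dR dB) := by
  have h : CD dR dB = {x | (mk4 0 x).PosSemidef} ∩ ({x | (mk4 1 x).PosSemidef} ∩
      ({x | (mk4 2 x).PosSemidef} ∩ ({x | (mk4 3 x).PosSemidef} ∩ {x | (mσ x).PosSemidef}))) := by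
    ext x
    simp [CD, Set.mem_inter_iff, and_assoc]
  rw [h]
  refine (isClosed_psd_pullback _ fun p q => coord_continuous _).inter
    ((isClosed_psd_pullback _ fun p q => coord_continuous _).inter
    ((isClosed_psd_pullback _ fun p q => coord_continuous _).inter
    ((isClosed_psd_pullback _ fun p q => coord_continuous _).inter
    (isClosed_psd_pullback _ fun p q => coord_continuous _))))

lemma CD_smul {c : ℝ} (hc : 0 ≤ c) {x : ED dR dB} (hx : x ∈ CD dR dB) : c • x ∈ CD dR dB := by
  obtain ⟨h0, h1, h2, h3, hs⟩ := hx
  have hk : ∀ k : Fin 4, mk4 k (c • x) = (c : ℂ) • mk4 k x := fun k => rsmul_eq c (mk4 k x)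
  have hσ' : mσ (c • x) = (c : ℂ) • mσ x := rsmul_eq c (mσ x)
  exact ⟨hk 0 ▸ psd_real_smul h0 hc, hk 1 ▸ psd_real_smul h1 hc, hk 2 ▸ psd_real_smul h2 hc,
    hk 3 ▸ psd_real_smul h3 hc, hσ' ▸ psd_real_smul hs hc⟩

lemma CD_add {x y : ED dR dB} (hx : x ∈ CD dR dB) (hy : y ∈ CD dR dB) : x + y ∈ CD dR dB := by
  obtain ⟨h0, h1, h2, h3, hs⟩ := hx
  obtain ⟨g0, g1, g2, g3, gs⟩ := hy
  exact ⟨h0.add g0, h1.add g1, h2.add g2, h3.add g3, hs.add gs⟩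

/-- the dual feasible cone -/
def KK (dR dB : ℕ) : ConvexCone ℝ (HS dR dB) where
  carrier := fD dR dB '' CD dR dB
  smul_mem' := by
    rintro c hc - ⟨u, hu, rfl⟩
    exact ⟨c • u, CD_smul hc.le hu, ((fD dR dB).map_smul c u)⟩
  add_mem' := by
    rintro - ⟨u, hu, rfl⟩ - ⟨v, hv, rfl⟩
    exact ⟨u + v, CD_add hu hv, ((fD dR dB).map_add u v)⟩

lemma trace_ptB (X : RBMat dR dB) : (ptB X).trace = X.trace := rfl

lemma mem_CD_ker {x : ED dR dB} (hx : x ∈ CD dR dB) (h : fD dR dB x = 0) : x = 0 := by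
  obtain ⟨h0, h1, h2, h3, hs⟩ := hx
  have hF : mk4 0 x + ptB (mk4 2 x - mk4 1 x) - mk4 3 x = 0 := by
    funext p q
    exact congrArg (fun z : HS dR dB => z (Sum.inl (p, q))) h
  have hG : ptrB (mk4 0 x) + ptrB (mk4 2 x) + mσ x = 0 := by
    funext r r'
    exact congrArg (fun z : HS dR dB => z (Sum.inr (r, r'))) h
  -- second component: all three PSD matrices sum to zero
  have hZtr : ((ptrB (mk4 0 x)).trace).re = 0 ∧ ((ptrB (mk4 2 x)).trace).re = 0 ∧
      ((mσ x).trace).re = 0 := by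
    have hsum := congrArg (fun M => (Matrix.trace M).re) hG
    simp only [Matrix.trace_add, Complex.add_re, Matrix.trace_zero, Complex.zero_re] at hsum
    have a1 := (psd_trace_eq_re (psd_ptrB h0)).2
    have a2 := (psd_trace_eq_re (psd_ptrB h2)).2
    have a3 := (psd_trace_eq_re hs).2
    refine ⟨by linarith, by linarith, by linarith⟩
  have hZ : mk4 0 x = 0 := by
    apply psd_eq_zero_of_trace h0
    rw [← trace_ptrB]
    exact hZtr.1
  have hY : mk4 2 x = 0 := by
    apply psd_eq_zero_of_trace h2
    rw [← trace_ptrB]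
    exact hZtr.2.1
  have hσ0 : mσ x = 0 := psd_eq_zero_of_trace hs hZtr.2.2
  -- first component
  have hW : mk4 3 x = - ptB (mk4 1 x) := by
    rw [hZ, hY] at hF
    have h' := sub_eq_zero.mp hF
    rw [← h', zero_add, zero_sub, ptB_neg]
  have hLtr : ((mk4 1 x).trace).re = 0 := by
    have t1 := (psd_trace_eq_re h3).2
    have t2 := (psd_trace_eq_re h1).2
    have : ((mk4 3 x).trace).re = -(((mk4 1 x).trace).re) := by
      rw [hW, Matrix.trace_neg, trace_ptB]
      simp
    linarith [this ▸ t1]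
  have hL : mk4 1 x = 0 := psd_eq_zero_of_trace h1 hLtr
  have hW0 : mk4 3 x = 0 := by rw [hW, hL, ptB_zero, neg_zero]
  refine PiLp.ext fun i => ?_
  rcases i with ⟨k, pq⟩ | rr
  · have hall : ∀ k : Fin 4, mk4 k x = 0 := by
      intro k
      fin_cases k
      exacts [hZ, hL, hY, hW0]
    have := congrFun (congrFun (hall k) pq.1) pq.2
    simpa [mk4] using this
  · have := congrFun (congrFun hσ0 rr.1) rr.2
    simpa [mσ] using this

lemma isClosed_KK : IsClosed ((KK dR dB : Set (HS dR dB))) := by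
  refine isClosed_image_cone (fD dR dB) (CD dR dB) isClosed_CD
    (fun c hc x hx => CD_smul hc hx) (fun x hx h => mem_CD_ker hx h)

lemma KK_nonempty : ((KK dR dB : Set (HS dR dB))).Nonempty := by
  refine ⟨fD dR dB 0, 0, ?_, rfl⟩
  have h : ∀ k : Fin 4, mk4 k (0 : ED dR dB) = 0 := fun _ => rfl
  have hσ : mσ (0 : ED dR dB) = 0 := rfl
  exact ⟨h 0 ▸ Matrix.PosSemidef.zero, h 1 ▸ Matrix.PosSemidef.zero,
    h 2 ▸ Matrix.PosSemidef.zero, h 3 ▸ Matrix.PosSemidef.zero, hσ ▸ Matrix.PosSemidef.zero⟩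

lemma KK_separation {b : HS dR dB} (hb : b ∉ KK dR dB) :
    ∃ y : HS dR dB, (∀ x ∈ KK dR dB, 0 ≤ inner ℝ x y) ∧ inner ℝ y b < 0 := by
  let C : ProperCone ℝ (HS dR dB) :=
    { carrier := fD dR dB '' CD dR dB
      add_mem' := by
        rintro - - ⟨u, hu, rfl⟩ ⟨v, hv, rfl⟩
        exact ⟨u + v, CD_add hu hv, (fD dR dB).map_add u v⟩
      zero_mem' := by
        obtain ⟨_, u, hu, rfl⟩ := (KK_nonempty (dR := dR) (dB := dB))
        exact ⟨(0:ℝ) • u, CD_smul le_rfl hu, by simp⟩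
      smul_mem' := by
        rintro c - ⟨u, hu, rfl⟩
        exact ⟨(c:ℝ) • u, CD_smul c.2 hu, by rw [(fD dR dB).map_smul]; rfl⟩
      isClosed' := isClosed_KK }
  obtain ⟨y, hy, hyb⟩ := C.hyperplane_separation' (x₀ := b) (fun h => hb h)
  exact ⟨y, fun x hx => hy x hx, by rwa [real_inner_comm]⟩

lemma embD_mk0 (Z L Y W : RBMat dR dB) (σ : Matrix (Fin dR) (Fin dR) ℂ) :
    mk4 0 (embD Z L Y W σ) = Z := rfl

lemma embD_mk1 (Z L Y W : RBMat dR dB) (σ : Matrix (Fin dR) (Fin dR) ℂ) :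
    mk4 1 (embD Z L Y W σ) = L := rfl

lemma embD_mk2 (Z L Y W : RBMat dR dB) (σ : Matrix (Fin dR) (Fin dR) ℂ) :
    mk4 2 (embD Z L Y W σ) = Y := rfl

lemma embD_mk3 (Z L Y W : RBMat dR dB) (σ : Matrix (Fin dR) (Fin dR) ℂ) :
    mk4 3 (embD Z L Y W σ) = W := rfl

lemma embD_mσ (Z L Y W : RBMat dR dB) (σ : Matrix (Fin dR) (Fin dR) ℂ) :
    mσ (embD Z L Y W σ) = σ := rfl

lemma embD_mem {Z L Y W : RBMat dR dB} {σ : Matrix (Fin dR) (Fin dR) ℂ}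
    (hZ : Z.PosSemidef) (hL : L.PosSemidef) (hY : Y.PosSemidef) (hW : W.PosSemidef)
    (hσ : σ.PosSemidef) : embD Z L Y W σ ∈ CD dR dB :=
  ⟨hZ, hL, hY, hW, hσ⟩

lemma fD_embD (Z L Y W : RBMat dR dB) (σ : Matrix (Fin dR) (Fin dR) ℂ) :
    fD dR dB (embD Z L Y W σ) = emb (Z + ptB (Y - L) - W) (ptrB Z + ptrB Y + σ) := rfl

end Sep

lemma psd_of_isEmpty {m : Type*} [Fintype m] [IsEmpty m] (M : Matrix m m ℂ) : M.PosSemidef := by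
  refine Matrix.PosSemidef.of_dotProduct_mulVec_nonneg ?_ ?_
  · funext i j
    exact (IsEmpty.false i).elim
  · intro v
    simp [dotProduct]

end SDPAux

open SDPAux in
/-- SDP strong duality for the PPT-measured hockey-stick channel divergence,
expressed in terms of the Choi operators `Γ^P` and `Γ^Q` via `A := Γ^P − γΓ^Q`. -/
theorem stmt_15 {dR dB : ℕ} (γ : ℝ) (hγ : 1 ≤ γ)
    (ΓP ΓQ : RBMat dR dB) (hP : ΓP.PosSemidef) (hQ : ΓQ.PosSemidef)
    (hPtr : ptrB ΓP = 1) (hQtr : ptrB ΓQ = 1) :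
    sSup {x : ℝ | ∃ (Ω : RBMat dR dB) (ρ : Matrix (Fin dR) (Fin dR) ℂ),
        Ω.PosSemidef ∧ ρ.PosSemidef ∧ ρ.trace = 1 ∧
        ((ρ ⊗ₖ (1 : Matrix (Fin dB) (Fin dB) ℂ)) - Ω).PosSemidef ∧
        (ptB Ω).PosSemidef ∧
        ((ρ ⊗ₖ (1 : Matrix (Fin dB) (Fin dB) ℂ)) - ptB Ω).PosSemidef ∧
        x = ((Ω * (ΓP - (γ : ℂ) • ΓQ)).trace).re} =
    sInf {μ : ℝ | 0 ≤ μ ∧ ∃ Z L Y : RBMat dR dB,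
        Z.PosSemidef ∧ L.PosSemidef ∧ Y.PosSemidef ∧
        ((Z + ptB (Y - L)) - (ΓP - (γ : ℂ) • ΓQ)).PosSemidef ∧
        ((μ : ℂ) • (1 : Matrix (Fin dR) (Fin dR) ℂ) - (ptrB Z + ptrB Y)).PosSemidef} := by
  classical
  set A : RBMat dR dB := ΓP - (γ : ℂ) • ΓQ with hAdef
  have hγ0 : (0:ℝ) ≤ γ := le_trans zero_le_one hγ
  have hAherm : A.IsHermitian := by
    have h1 : ((γ:ℂ) • ΓQ).IsHermitian := by
      unfold Matrix.IsHermitian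
      rw [Matrix.conjTranspose_smul, hQ.1]
      congr 1
      simp [Complex.conj_ofReal]
    exact hP.1.sub h1
  set SP := {x : ℝ | ∃ (Ω : RBMat dR dB) (ρ : Matrix (Fin dR) (Fin dR) ℂ),
        Ω.PosSemidef ∧ ρ.PosSemidef ∧ ρ.trace = 1 ∧
        ((ρ ⊗ₖ (1 : Matrix (Fin dB) (Fin dB) ℂ)) - Ω).PosSemidef ∧
        (ptB Ω).PosSemidef ∧
        ((ρ ⊗ₖ (1 : Matrix (Fin dB) (Fin dB) ℂ)) - ptB Ω).PosSemidef ∧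
        x = ((Ω * A).trace).re} with hSPdef
  set SD := {μ : ℝ | 0 ≤ μ ∧ ∃ Z L Y : RBMat dR dB,
        Z.PosSemidef ∧ L.PosSemidef ∧ Y.PosSemidef ∧
        ((Z + ptB (Y - L)) - A).PosSemidef ∧
        ((μ : ℂ) • (1 : Matrix (Fin dR) (Fin dR) ℂ) - (ptrB Z + ptrB Y)).PosSemidef} with hSDdef
  show sSup SP = sInf SD
  rcases Nat.eq_zero_or_pos dR with hdR0 | hdRpos
  · -- degenerate case dR = 0
    subst hdR0
    haveI : IsEmpty (Fin 0) := inferInstance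
    have hSP : SP = ∅ := by
      ext x
      simp only [hSPdef, Set.mem_setOf_eq, Set.mem_empty_iff_false, iff_false]
      rintro ⟨Ω, ρ, -, -, htr, -⟩
      have h0 : ρ.trace = 0 := by
        simp [Matrix.trace]
      rw [h0] at htr
      exact one_ne_zero htr.symm
    have hSD : SD = Set.Ici 0 := by
      ext μ
      simp only [hSDdef, Set.mem_setOf_eq, Set.mem_Ici]
      constructor
      · rintro ⟨hμ, -⟩; exact hμ
      · intro hμ
        exact ⟨hμ, 0, 0, 0, psd_of_isEmpty _, psd_of_isEmpty _, psd_of_isEmpty _,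
          psd_of_isEmpty _, psd_of_isEmpty _⟩
    rw [hSP, hSD, Real.sSup_empty, csInf_Ici]
  · -- main case
    have hdRne : (dR : ℝ) ≠ 0 := Nat.cast_ne_zero.mpr (Nat.pos_iff_ne_zero.mp hdRpos)
    -- primal membership of 0
    have h0P : (0:ℝ) ∈ SP := by
      refine ⟨0, (((dR:ℝ)⁻¹ : ℝ) : ℂ) • 1, Matrix.PosSemidef.zero, psd_real_smul psd_one (by positivity), ?_, ?_, ?_, ?_, ?_⟩
      · rw [Matrix.trace_smul, Matrix.trace_one, smul_eq_mul]
        push_cast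
        field_simp
        simp
      · rw [sub_zero]
        exact psd_kron_one (psd_real_smul psd_one (by positivity))
      · rw [ptB_zero]
        exact Matrix.PosSemidef.zero
      · rw [ptB_zero, sub_zero]
        exact psd_kron_one (psd_real_smul psd_one (by positivity))
      · rw [Matrix.zero_mul, Matrix.trace_zero]
        rfl
    -- dual membership of 1
    have h1D : (1:ℝ) ∈ SD := by
      refine ⟨zero_le_one, ΓP, 0, 0, hP, Matrix.PosSemidef.zero, Matrix.PosSemidef.zero, ?_, ?_⟩
      · rw [show ((0:RBMat dR dB) - 0) = 0 by rw [sub_zero], ptB_zero, add_zero, hAdef,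
          sub_sub_cancel]
        exact psd_real_smul hQ hγ0
      · rw [ptrB_zero, add_zero, hPtr]
        push_cast
        rw [one_smul, sub_self]
        exact Matrix.PosSemidef.zero
    -- weak duality
    have hweak : ∀ x ∈ SP, ∀ μ ∈ SD, x ≤ μ := by
      rintro x ⟨Ω, ρ, hΩ, hρ, hρtr, hc1, hc2, hc3, rfl⟩ μ ⟨hμ0, Z, L, Y, hZ, hL, hY, hD1, hD2⟩
      show rtr Ω A ≤ μ
      have e1 : rtr Ω ((Z + ptB (Y - L)) - A)
          = rtr Ω Z + (rtr Ω (ptB Y) - rtr Ω (ptB L)) - rtr Ω A := by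
        rw [rtr_sub_right, rtr_add_right, ptB_sub, rtr_sub_right]
      have w1 : 0 ≤ rtr Ω ((Z + ptB (Y - L)) - A) := rtr_nonneg hΩ hD1
      have e2 : rtr Ω (ptB Y) = rtr (ptB Ω) Y := by
        unfold rtr
        rw [trace_ptB_mul]
      have e3 : rtr Ω (ptB L) = rtr (ptB Ω) L := by
        unfold rtr
        rw [trace_ptB_mul]
      have w2 : 0 ≤ rtr Z ((ρ ⊗ₖ (1 : Matrix (Fin dB) (Fin dB) ℂ)) - Ω) := rtr_nonneg hZ hc1
      have w3 : 0 ≤ rtr (ptB Ω) L := rtr_nonneg hc2 hL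
      have w4 : 0 ≤ rtr Y ((ρ ⊗ₖ (1 : Matrix (Fin dB) (Fin dB) ℂ)) - ptB Ω) := rtr_nonneg hY hc3
      have w5 : 0 ≤ rtr ρ (((μ:ℝ):ℂ) • (1 : Matrix (Fin dR) (Fin dR) ℂ) - (ptrB Z + ptrB Y)) :=
        rtr_nonneg hρ hD2
      have e4 : rtr Z ((ρ ⊗ₖ (1 : Matrix (Fin dB) (Fin dB) ℂ)) - Ω)
          = rtr ρ (ptrB Z) - rtr Ω Z := by
        rw [rtr_sub_right]
        congr 1
        · rw [rtr_comm]
          unfold rtr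
          rw [trace_kron_one_mul]
        · rw [rtr_comm]
      have e5 : rtr Y ((ρ ⊗ₖ (1 : Matrix (Fin dB) (Fin dB) ℂ)) - ptB Ω)
          = rtr ρ (ptrB Y) - rtr (ptB Ω) Y := by
        rw [rtr_sub_right]
        congr 1
        · rw [rtr_comm]
          unfold rtr
          rw [trace_kron_one_mul]
        · rw [rtr_comm]
      have e6 : rtr ρ (((μ:ℝ):ℂ) • (1 : Matrix (Fin dR) (Fin dR) ℂ) - (ptrB Z + ptrB Y))
          = μ - (rtr ρ (ptrB Z) + rtr ρ (ptrB Y)) := by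
        rw [rtr_sub_right, rtr_add_right, rtr_rsmul_right]
        congr 1
        unfold rtr
        rw [Matrix.mul_one, hρtr]
        simp
      rw [e1, e2, e3] at w1
      rw [e4] at w2
      rw [e5] at w4
      rw [e6] at w5
      linarith
    have hPne : SP.Nonempty := ⟨0, h0P⟩
    have hbdd : BddAbove SP := ⟨1, fun x hx => hweak x hx 1 h1D⟩
    set S := sSup SP with hSdef
    have hS0 : 0 ≤ S := le_csSup hbdd h0P
    have hSD_eq : SD = Set.Ici S := by
      ext μ
      simp only [Set.mem_Ici]
      constructor
      · intro hμ
        exact csSup_le hPne fun x hx => hweak x hx μ hμ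
      · intro hμS
        have hμ0 : 0 ≤ μ := le_trans hS0 hμS
        -- strong duality: show the dual witnesses exist
        have hbK : emb A (((μ:ℝ):ℂ) • (1 : Matrix (Fin dR) (Fin dR) ℂ)) ∈ KK dR dB := by
          by_contra hb
          obtain ⟨y, hy, hyb⟩ := KK_separation hb
          set N := mΩ y with hNdef
          set ρy := mρ y with hρydef
          -- generator inequalities
          have hi : ∀ σ : Matrix (Fin dR) (Fin dR) ℂ, σ.PosSemidef → 0 ≤ rtr σ ρy := by
            intro σ hσ
            have hval := hy _ ⟨_, embD_mem Matrix.PosSemidef.zero Matrix.PosSemidef.zero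
              Matrix.PosSemidef.zero Matrix.PosSemidef.zero hσ, rfl⟩
            rw [fD_embD,
              show ((0:RBMat dR dB) + ptB ((0:RBMat dR dB) - 0) - 0) = 0 by simp [ptB_zero],
              show (ptrB (0:RBMat dR dB) + ptrB (0:RBMat dR dB) + σ) = σ by simp [ptrB_zero],
              inner_emb, frob_zero_left, zero_add, frob_eq_rtr hσ.1] at hval
            exact hval
          have hii : ∀ W : RBMat dR dB, W.PosSemidef → 0 ≤ rtr W (-N) := by
            intro W hW
            have hval := hy _ ⟨_, embD_mem Matrix.PosSemidef.zero Matrix.PosSemidef.zero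
              Matrix.PosSemidef.zero hW Matrix.PosSemidef.zero, rfl⟩
            rw [fD_embD,
              show ((0:RBMat dR dB) + ptB ((0:RBMat dR dB) - 0) - W) = -W by simp [ptB_zero],
              show (ptrB (0:RBMat dR dB) + ptrB (0:RBMat dR dB) + 0)
                = (0 : Matrix (Fin dR) (Fin dR) ℂ) by simp [ptrB_zero],
              inner_emb, frob_zero_left, add_zero, frob_eq_rtr hW.1.neg, rtr_neg_left] at hval
            rw [rtr_neg_right]
            linarith
          have hiii : ∀ L : RBMat dR dB, L.PosSemidef → 0 ≤ rtr L (ptB (-N)) := by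
            intro L hL
            have hval := hy _ ⟨_, embD_mem Matrix.PosSemidef.zero hL
              Matrix.PosSemidef.zero Matrix.PosSemidef.zero Matrix.PosSemidef.zero, rfl⟩
            rw [fD_embD,
              show ((0:RBMat dR dB) + ptB ((0:RBMat dR dB) - L) - 0) = -(ptB L) by
                simp [zero_sub, ptB_neg],
              show (ptrB (0:RBMat dR dB) + ptrB (0:RBMat dR dB) + 0)
                = (0 : Matrix (Fin dR) (Fin dR) ℂ) by simp [ptrB_zero],
              inner_emb, frob_zero_left, add_zero,
              frob_eq_rtr (ptB_isHermitian hL.1).neg, rtr_neg_left] at hval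
            have he : rtr (ptB L) N = rtr L (ptB N) := congrArg Complex.re (trace_ptB_mul L N)
            rw [ptB_neg, rtr_neg_right]
            linarith [he ▸ hval]
          have hiv : ∀ Z : RBMat dR dB, Z.PosSemidef →
              0 ≤ rtr Z (N + ρy ⊗ₖ (1 : Matrix (Fin dB) (Fin dB) ℂ)) := by
            intro Z hZ
            have hval := hy _ ⟨_, embD_mem hZ Matrix.PosSemidef.zero
              Matrix.PosSemidef.zero Matrix.PosSemidef.zero Matrix.PosSemidef.zero, rfl⟩
            rw [fD_embD,
              show (Z + ptB ((0:RBMat dR dB) - 0) - 0) = Z by simp [ptB_zero],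
              show (ptrB Z + ptrB (0:RBMat dR dB) + 0) = ptrB Z by simp [ptrB_zero],
              inner_emb, frob_eq_rtr hZ.1, frob_eq_rtr (ptrB_isHermitian hZ.1)] at hval
            have hkv : rtr (ptrB Z) ρy = rtr Z (ρy ⊗ₖ (1 : Matrix (Fin dB) (Fin dB) ℂ)) := by
              unfold rtr
              rw [Matrix.trace_mul_comm, ← trace_kron_one_mul, Matrix.trace_mul_comm]
            rw [rtr_add_right]
            linarith [hkv ▸ hval]
          have hv : ∀ Y : RBMat dR dB, Y.PosSemidef →
              0 ≤ rtr Y (ptB N + ρy ⊗ₖ (1 : Matrix (Fin dB) (Fin dB) ℂ)) := by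
            intro Y hY
            have hval := hy _ ⟨_, embD_mem Matrix.PosSemidef.zero Matrix.PosSemidef.zero
              hY Matrix.PosSemidef.zero Matrix.PosSemidef.zero, rfl⟩
            rw [fD_embD,
              show ((0:RBMat dR dB) + ptB (Y - (0:RBMat dR dB)) - 0) = ptB Y by simp,
              show (ptrB (0:RBMat dR dB) + ptrB Y + 0) = ptrB Y by simp [ptrB_zero],
              inner_emb, frob_eq_rtr (ptB_isHermitian hY.1),
              frob_eq_rtr (ptrB_isHermitian hY.1)] at hval
            have he : rtr (ptB Y) N = rtr Y (ptB N) := congrArg Complex.re (trace_ptB_mul Y N)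
            have hkv : rtr (ptrB Y) ρy = rtr Y (ρy ⊗ₖ (1 : Matrix (Fin dB) (Fin dB) ℂ)) := by
              unfold rtr
              rw [Matrix.trace_mul_comm, ← trace_kron_one_mul, Matrix.trace_mul_comm]
            rw [rtr_add_right]
            linarith [he ▸ hkv ▸ hval]
          -- Hermitian parts
          set Ω' := hermPart (-N) with hΩ'def
          set ρ0 := hermPart ρy with hρ0def
          have hNh : hermPart N = -Ω' := by
            rw [hΩ'def, hermPart_neg, neg_neg]
          have hΩ'psd : Ω'.PosSemidef := hermPart_psd_of_tests hii
          have hptBΩ'psd : (ptB Ω').PosSemidef := by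
            have h := hermPart_psd_of_tests hiii
            rwa [hermPart_ptB] at h
          have hρ0psd : ρ0.PosSemidef := hermPart_psd_of_tests hi
          have h4 : (-Ω' + ρ0 ⊗ₖ (1 : Matrix (Fin dB) (Fin dB) ℂ)).PosSemidef := by
            have h := hermPart_psd_of_tests hiv
            rwa [hermPart_add, hermPart_kron_one, hNh, ← hρ0def] at h
          have h5 : (-(ptB Ω') + ρ0 ⊗ₖ (1 : Matrix (Fin dB) (Fin dB) ℂ)).PosSemidef := by
            have h := hermPart_psd_of_tests hv
            rwa [hermPart_add, hermPart_kron_one, hermPart_ptB, hNh, ptB_neg, ← hρ0def] at h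
          -- the strict inequality
          set t := (ρy.trace).re with htdef
          have hstrict : rtr A (-Ω') + μ * t < 0 := by
            rw [real_inner_comm, inner_emb] at hyb
            have hfA : frob A N = rtr A (-Ω') := by
              rw [frob_eq_rtr hAherm, ← hNh, rtr_hermPart hAherm]
            have hfmu : frob (((μ:ℝ):ℂ) • (1 : Matrix (Fin dR) (Fin dR) ℂ)) ρy = μ * t := by
              have hmuherm : (((μ:ℝ):ℂ) • (1 : Matrix (Fin dR) (Fin dR) ℂ)).IsHermitian := by
                unfold Matrix.IsHermitian
                rw [Matrix.conjTranspose_smul, Matrix.conjTranspose_one]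
                congr 1
                simp [Complex.conj_ofReal]
              rw [frob_eq_rtr hmuherm]
              unfold rtr
              rw [Matrix.smul_mul, Matrix.one_mul, Matrix.trace_smul, smul_eq_mul,
                Complex.re_ofReal_mul]
            rw [hfA, hfmu] at hyb
            exact hyb
          have hρ0tr : ρ0.trace = ((t:ℝ):ℂ) := hermPart_trace ρy
          have ht0 : 0 ≤ t := by
            have h := (psd_trace_eq_re hρ0psd).2
            rw [hρ0tr] at h
            simpa using h
          rcases eq_or_lt_of_le ht0 with ht | ht
          · -- t = 0: contradiction
            have hρ00 : ρ0 = 0 := by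
              apply psd_eq_zero_of_trace hρ0psd
              rw [hρ0tr, ← ht]
              simp
            have h4' : (-Ω').PosSemidef := by
              have := h4
              rwa [hρ00, Matrix.zero_kronecker, add_zero] at this
            have hΩ'0 : Ω' = 0 := psd_zero_of_psd_neg hΩ'psd h4'
            rw [hΩ'0, neg_zero, rtr_zero_right, ← ht] at hstrict
            linarith
          · -- t > 0: build a primal point beating μ
            set c := t⁻¹ with hcdef
            have hc0 : 0 ≤ c := inv_nonneg.mpr ht0
            set Ωm := ((c:ℝ):ℂ) • Ω' with hΩmdef
            set ρm := ((c:ℝ):ℂ) • ρ0 with hρmdef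
            have hmem : rtr Ωm A ∈ SP := by
              refine ⟨Ωm, ρm, psd_real_smul hΩ'psd hc0, psd_real_smul hρ0psd hc0, ?_, ?_, ?_, ?_, rfl⟩
              · rw [hρmdef, Matrix.trace_smul, hρ0tr, smul_eq_mul]
                rw [← Complex.ofReal_mul]
                rw [hcdef, inv_mul_cancel₀ (ne_of_gt ht)]
                simp
              · rw [hρmdef, kron_one_smul, hΩmdef, ← smul_sub]
                refine psd_real_smul ?_ hc0
                rwa [sub_eq_neg_add]
              · rw [hΩmdef, ptB_smul]
                exact psd_real_smul hptBΩ'psd hc0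
              · rw [hρmdef, kron_one_smul, hΩmdef, ptB_smul, ← smul_sub]
                refine psd_real_smul ?_ hc0
                rwa [sub_eq_neg_add]
            have hle : rtr Ωm A ≤ S := le_csSup hbdd hmem
            have hval : rtr Ωm A = c * rtr A Ω' := by
              rw [hΩmdef, rtr_rsmul_left, rtr_comm]
            have hAΩ' : μ * t < rtr A Ω' := by
              rw [rtr_neg_right] at hstrict
              linarith
            have : μ < rtr Ωm A := by
              rw [hval]
              have h1 : c * (μ * t) < c * rtr A Ω' :=
                mul_lt_mul_of_pos_left hAΩ' (by positivity)
              have h2 : c * (μ * t) = μ := by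
                field_simp [hcdef]
                rw [hcdef, mul_assoc, mul_comm μ t, ← mul_assoc, inv_mul_cancel₀ (ne_of_gt ht), one_mul]
              linarith
            linarith [hμS, hle]
        -- extract the dual witnesses from hbK
        obtain ⟨u, hu, hfu⟩ := hbK
        have hF : mk4 0 u + ptB (mk4 2 u - mk4 1 u) - mk4 3 u = A := by
          funext p q
          exact congrArg (fun z : HS dR dB => z (Sum.inl (p, q))) hfu
        have hG : ptrB (mk4 0 u) + ptrB (mk4 2 u) + mσ u
            = ((μ:ℝ):ℂ) • (1 : Matrix (Fin dR) (Fin dR) ℂ) := by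
          funext r r'
          exact congrArg (fun z : HS dR dB => z (Sum.inr (r, r'))) hfu
        refine ⟨hμ0, mk4 0 u, mk4 1 u, mk4 2 u, hu.1, hu.2.1, hu.2.2.1, ?_, ?_⟩
        · have h : (mk4 0 u + ptB (mk4 2 u - mk4 1 u)) - A = mk4 3 u := by
            rw [← hF]; abel
          rw [h]
          exact hu.2.2.2.1
        · have h : ((μ:ℝ):ℂ) • (1 : Matrix (Fin dR) (Fin dR) ℂ)
              - (ptrB (mk4 0 u) + ptrB (mk4 2 u)) = mσ u := by
            rw [← hG]; abel
          rw [h]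
          exact hu.2.2.2.2
    rw [hSD_eq, csInf_Ici]
end
end
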